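/- Second-best structure in a separable maximization differs in exactly one coordinate: let I be a finite index set, each 𝒜_i a nonempty finite set with injective value functions v_i : 𝒜_i → ℝ (no ties: v_i(a) ≠ v_i(b) for a ≠ b), and assume also no ties among total values of distinct assignments. Order all assignments (a_i)_{i∈I} ∈ ∏ 𝒜_i by total value ∑_i v_i(a_i). Then for every l ≥ 2, the l-th best assignment agrees with some strictly better assignment in all coordinates except exactly one. -/

import Mathlib

/-- In a separable maximization with no per-coordinate ties and no ties among
total values, any assignment that is not optimal admits a strictly better
assignment differing from it in exactly one coordinate. -/
theorem stmt_15 {ι : Type*} [Fintype ι] [DecidableEq ι] (A : ι → Type*)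
    [∀ i, Fintype (A i)] [∀ i, Nonempty (A i)] [∀ i, DecidableEq (A i)]
    (v : ∀ i, A i → ℝ)
    (hinj : ∀ i, Function.Injective (v i))
    (hties : ∀ a b : ∀ i, A i, a ≠ b → (∑ i, v i (a i)) ≠ ∑ i, v i (b i))
    (b : ∀ i, A i)
    (hnotbest : ∃ a' : ∀ i, A i, (∑ i, v i (b i)) < ∑ i, v i (a' i)) :
    ∃ a : ∀ i, A i, (∑ i, v i (b i)) < (∑ i, v i (a i)) ∧
      (Finset.univ.filter (fun i => a i ≠ b i)).card = 1 := by
  obtain ⟨a0, ha0⟩ := hnotbest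
  have hsum : ∀ (f : ∀ i, A i) (j : ι) (x : A j),
      ∑ i, v i (Function.update f j x i) = ∑ i, v i (f i) - v j (f j) + v j x := by
    intro f j x
    have h1 := Finset.add_sum_erase Finset.univ
      (fun i => v i (Function.update f j x i)) (Finset.mem_univ j)
    have h2 := Finset.add_sum_erase Finset.univ (fun i => v i (f i)) (Finset.mem_univ j)
    have h3 : ∑ i ∈ Finset.univ.erase j, v i (Function.update f j x i)
        = ∑ i ∈ Finset.univ.erase j, v i (f i) :=
      Finset.sum_congr rfl (fun i hi => by
        rw [Function.update_of_ne (Finset.ne_of_mem_erase hi)])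
    rw [← h1, ← h2, h3]
    simp only [Function.update_self]
    ring
  suffices H : ∀ n : ℕ, ∀ a : ∀ i, A i, (∑ i, v i (b i)) < ∑ i, v i (a i) →
      (Finset.univ.filter (fun i => a i ≠ b i)).card = n →
      ∃ a : ∀ i, A i, (∑ i, v i (b i)) < (∑ i, v i (a i)) ∧
        (Finset.univ.filter (fun i => a i ≠ b i)).card = 1 by
    exact H _ a0 ha0 rfl
  intro n
  induction n using Nat.strong_induction_on with
  | _ n ih =>
    intro a ha hcard
    rcases Nat.eq_zero_or_pos n with hn0 | hnpos
    · -- impossible: a = b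
      exfalso
      rw [hn0, Finset.card_eq_zero] at hcard
      have : a = b := by
        funext i
        by_contra hne
        have : i ∈ Finset.univ.filter (fun i => a i ≠ b i) := by
          simp [hne]
        rw [hcard] at this
        exact absurd this (Finset.notMem_empty i)
      rw [this] at ha
      exact lt_irrefl _ ha
    · rcases eq_or_lt_of_le (show 1 ≤ n from hnpos) with hn1 | hn2
      · exact ⟨a, ha, by rw [hcard, ← hn1]⟩
      · -- n ≥ 2: pick j with a j ≠ b j
        have hne : (Finset.univ.filter (fun i => a i ≠ b i)).Nonempty := by
          rw [← Finset.card_pos, hcard]; exact hnpos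
        obtain ⟨j, hj⟩ := hne
        have haj : a j ≠ b j := (Finset.mem_filter.mp hj).2
        have hv : v j (a j) ≠ v j (b j) := fun h => haj (hinj j h)
        rcases hv.lt_or_gt with hlt | hgt
        · -- v j (a j) < v j (b j): replace a j by b j, strictly better, one fewer diff
          set a' := Function.update a j (b j) with ha'
          have hsa' : ∑ i, v i (a' i) = ∑ i, v i (a i) - v j (a j) + v j (b j) :=
            hsum a j (b j)
          have hbetter : (∑ i, v i (b i)) < ∑ i, v i (a' i) := by
            rw [hsa']; linarith
          have hfilt : Finset.univ.filter (fun i => a' i ≠ b i)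
              = (Finset.univ.filter (fun i => a i ≠ b i)).erase j := by
            ext i
            by_cases h : i = j
            · subst h
              simp [ha', Function.update_self]
            · simp [ha', Function.update_of_ne h, h]
          have hcard' : (Finset.univ.filter (fun i => a' i ≠ b i)).card = n - 1 := by
            rw [hfilt, Finset.card_erase_of_mem hj, hcard]
          exact ih (n - 1) (Nat.sub_lt hnpos one_pos) a' hbetter hcard'
        · -- v j (b j) < v j (a j): update b at j by a j gives a single-coordinate improvement
          refine ⟨Function.update b j (a j), ?_, ?_⟩
          · rw [hsum b j (a j)]; linarith
          · have hfilt : Finset.univ.filter (fun i => Function.update b j (a j) i ≠ b i)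
                = {j} := by
              ext i
              by_cases h : i = j
              · subst h
                simp [Function.update_self, haj]
              · simp [Function.update_of_ne h, h]
            rw [hfilt, Finset.card_singleton]
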